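/- arXiv:2302.04883 — 4 statements merged into one kernel-verified Lean document; each statement's English description precedes it below -/
import Mathlib

section
/- For a divisible non-Markovian evolution, if T^Λ = τ^Λ then T^Λ = τ^Λ = t^Λ; i.e., the configuration T^Λ = τ^Λ < t^Λ is impossible. -/
/-- For a divisible non-Markovian evolution, `TΛ = τΛ` implies
`TΛ = τΛ = tΛ`; i.e. the configuration `TΛ = τΛ < tΛ` is impossible. -/
theorem stmt9 {α : Type*} (C : Set (α → α))
    (hC : ∀ f g : α → α, f ∈ C → g ∈ C → f ∘ g ∈ C)
    (V : ℝ → ℝ → (α → α))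
    (hcomp : ∀ t₁ t₂ t₃ : ℝ, 0 ≤ t₁ → t₁ ≤ t₂ → t₂ ≤ t₃ → V t₃ t₁ = V t₃ t₂ ∘ V t₂ t₁)
    (TΛ τΛ tΛ : ℝ)
    (hA : ∀ s t : ℝ, 0 ≤ s → s ≤ t → t ≤ TΛ → V t s ∈ C)
    (hB : ∀ t : ℝ, TΛ ≤ t → V t TΛ ∈ C)
    (hmax : ∀ T : ℝ, 0 ≤ T →
      (∀ s t : ℝ, 0 ≤ s → s ≤ t → t ≤ T → V t s ∈ C) →
      (∀ t : ℝ, T ≤ t → V t T ∈ C) → T ≤ TΛ)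
    (hNM : ∃ s t : ℝ, 0 ≤ s ∧ s ≤ t ∧ V t s ∉ C)
    (hτ : Filter.Tendsto (fun ε : ℝ => sInf {T : ℝ | 0 ≤ T ∧ V (T + ε) T ∉ C})
      (nhdsWithin 0 (Set.Ioi 0)) (nhds τΛ))
    (ht : Filter.Tendsto (fun δ : ℝ => sInf {T : ℝ | TΛ + δ ≤ T ∧ V T (TΛ + δ) ∉ C})
      (nhdsWithin 0 (Set.Ioi 0)) (nhds tΛ))
    (heq : TΛ = τΛ) :
    TΛ = τΛ ∧ τΛ = tΛ := by
  have h3tend : Filter.Tendsto (fun n : ℕ => 3 / ((n : ℝ) + 1)) Filter.atTop (nhds 0) := by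
    simpa [mul_one_div, div_eq_mul_inv] using
      (tendsto_one_div_add_atTop_nhds_zero_nat).const_mul (3 : ℝ)
  have hfin : tΛ = TΛ := by
    by_cases hbr : ∃ ε₀ > (0 : ℝ), ∀ ε : ℝ, 0 < ε → ε < ε₀ → ∀ T : ℝ, 0 ≤ T →
        V (T + ε) T ∈ C
    · -- Branch 1: no instantaneous backflow at all for small ε.
      obtain ⟨ε₀, hε₀, hstep⟩ := hbr
      -- every strict-interval map is in C
      have strict : ∀ s t : ℝ, 0 ≤ s → s < t → V t s ∈ C := by
        have iter : ∀ h : ℝ, 0 < h → h < ε₀ → ∀ n : ℕ, ∀ s : ℝ, 0 ≤ s →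
            V (s + ((n : ℝ) + 1) * h) s ∈ C := by
          intro h h0 hlt n
          induction n with
          | zero =>
            intro s hs
            simpa using hstep h h0 hlt s hs
          | succ n ih =>
            intro s hs
            have hc : (((n + 1 : ℕ) : ℝ) + 1) = ((n : ℝ) + 1) + 1 := by push_cast; ring
            rw [hc]
            have hnn : (0 : ℝ) ≤ (n : ℝ) := Nat.cast_nonneg n
            have hle1 : s ≤ s + h := by linarith
            have hle2 : s + h ≤ s + (((n : ℝ) + 1) + 1) * h := by nlinarith
            have e1 : V (s + (((n : ℝ) + 1) + 1) * h) s
                = V (s + (((n : ℝ) + 1) + 1) * h) (s + h) ∘ V (s + h) s :=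
              hcomp s (s + h) (s + (((n : ℝ) + 1) + 1) * h) hs hle1 hle2
            rw [e1]
            have h2 := ih (s + h) (by linarith)
            have e2 : (s + h) + ((n : ℝ) + 1) * h = s + (((n : ℝ) + 1) + 1) * h := by ring
            rw [e2] at h2
            exact hC _ _ h2 (hstep h h0 hlt s hs)
        intro s t hs hst
        obtain ⟨n, hn⟩ := exists_nat_gt ((t - s) / ε₀)
        have hn1 : (0 : ℝ) < (n : ℝ) + 1 := by positivity
        have h0 : 0 < (t - s) / ((n : ℝ) + 1) := div_pos (by linarith) hn1
        have hn' : (t - s) / ε₀ < (n : ℝ) + 1 := hn.trans_le (by linarith)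
        have hts : t - s < ((n : ℝ) + 1) * ε₀ := by
          have := (div_lt_iff₀ hε₀).mp hn'
          nlinarith
        have hh : (t - s) / ((n : ℝ) + 1) < ε₀ := by
          rw [div_lt_iff₀ hn1]
          nlinarith
        have := iter ((t - s) / ((n : ℝ) + 1)) h0 hh n s hs
        have e3 : s + ((n : ℝ) + 1) * ((t - s) / ((n : ℝ) + 1)) = t := by
          field_simp
          ring
        rwa [e3] at this
      -- τΛ = 0
      have hg0 : ∀ᶠ ε in nhdsWithin (0 : ℝ) (Set.Ioi 0),
          sInf {T : ℝ | 0 ≤ T ∧ V (T + ε) T ∉ C} = 0 := by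
        filter_upwards [Ioo_mem_nhdsGT_of_mem (Set.mem_Ico.mpr ⟨le_refl (0 : ℝ), hε₀⟩)]
          with ε hε
        have hempty : {T : ℝ | 0 ≤ T ∧ V (T + ε) T ∉ C} = ∅ :=
          Set.eq_empty_iff_forall_notMem.mpr fun T hT =>
            hT.2 (hstep ε hε.1 hε.2 T hT.1)
        rw [hempty, Real.sInf_empty]
      have hτ0 : τΛ = 0 := by
        refine tendsto_nhds_unique hτ ?_
        refine Filter.Tendsto.congr' ?_ (tendsto_const_nhds (α := ℝ))
        filter_upwards [hg0] with ε hε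
        exact hε.symm
      have hT0 : TΛ = 0 := heq.trans hτ0
      -- squeeze f between 0 and δ
      have hbound : ∀ᶠ δ in nhdsWithin (0 : ℝ) (Set.Ioi 0),
          0 ≤ sInf {T : ℝ | TΛ + δ ≤ T ∧ V T (TΛ + δ) ∉ C} ∧
          sInf {T : ℝ | TΛ + δ ≤ T ∧ V T (TΛ + δ) ∉ C} ≤ δ := by
        filter_upwards [self_mem_nhdsWithin] with δ hδ
        have hδ0 : (0 : ℝ) < δ := hδ
        have hsub : {T : ℝ | TΛ + δ ≤ T ∧ V T (TΛ + δ) ∉ C} ⊆ {TΛ + δ} := by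
          intro T hT
          rcases lt_or_eq_of_le hT.1 with hlt | heqT
          · exact absurd (strict (TΛ + δ) T (by rw [hT0]; linarith) hlt) hT.2
          · exact heqT.symm
        rcases Set.eq_empty_or_nonempty {T : ℝ | TΛ + δ ≤ T ∧ V T (TΛ + δ) ∉ C} with
          hemp | hne
        · rw [hemp, Real.sInf_empty]
          exact ⟨le_refl 0, hδ0.le⟩
        · obtain ⟨x, hx⟩ := hne
          have hxe : x = TΛ + δ := hsub hx
          have hbdd : BddBelow {T : ℝ | TΛ + δ ≤ T ∧ V T (TΛ + δ) ∉ C} :=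
            ⟨TΛ + δ, fun y hy => hy.1⟩
          constructor
          · refine le_csInf ⟨x, hx⟩ fun y hy => ?_
            have := hy.1
            rw [hT0] at this
            linarith
          · have h1 : sInf {T : ℝ | TΛ + δ ≤ T ∧ V T (TΛ + δ) ∉ C} ≤ x :=
              csInf_le hbdd hx
            linarith
      have hsq : Filter.Tendsto
          (fun δ : ℝ => sInf {T : ℝ | TΛ + δ ≤ T ∧ V T (TΛ + δ) ∉ C})
          (nhdsWithin 0 (Set.Ioi 0)) (nhds 0) := by
        refine tendsto_of_tendsto_of_tendsto_of_le_of_le'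
          (tendsto_const_nhds) (Filter.Tendsto.mono_left Filter.tendsto_id nhdsWithin_le_nhds) ?_ ?_
        · filter_upwards [hbound] with δ hδ using hδ.1
        · filter_upwards [hbound] with δ hδ using hδ.2
      exact (tendsto_nhds_unique ht hsq).trans hT0.symm
    · -- Branch 2: instantaneous backflows exist for arbitrarily small ε.
      push_neg at hbr
      have key : ∀ n : ℕ, ∃ δ : ℝ, 0 < δ ∧ δ ≤ 3 / ((n : ℝ) + 1) ∧
          TΛ ≤ sInf {T : ℝ | TΛ + δ ≤ T ∧ V T (TΛ + δ) ∉ C} ∧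
          sInf {T : ℝ | TΛ + δ ≤ T ∧ V T (TΛ + δ) ∉ C} ≤ TΛ + 3 / ((n : ℝ) + 1) := by
        intro n
        set η : ℝ := 1 / ((n : ℝ) + 1) with hηdef
        have hη : 0 < η := by positivity
        have hev : ∀ᶠ ε in nhdsWithin (0 : ℝ) (Set.Ioi 0),
            dist (sInf {T : ℝ | 0 ≤ T ∧ V (T + ε) T ∉ C}) τΛ < η :=
          Metric.tendsto_nhds.mp hτ η hη
        obtain ⟨u, hu, hsubset⟩ := mem_nhdsGT_iff_exists_Ioo_subset.mp hev
        have hu0 : (0 : ℝ) < u := hu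
        obtain ⟨ε, hε0, hεlt, T₀, hT₀0, hT₀⟩ := hbr (min u η) (lt_min hu0 hη)
        have hεu : ε < u := lt_of_lt_of_le hεlt (min_le_left _ _)
        have hεη : ε < η := lt_of_lt_of_le hεlt (min_le_right _ _)
        have hdist : dist (sInf {T : ℝ | 0 ≤ T ∧ V (T + ε) T ∉ C}) τΛ < η :=
          hsubset ⟨hε0, hεu⟩
        have hgub : sInf {T : ℝ | 0 ≤ T ∧ V (T + ε) T ∉ C} < TΛ + η := by
          rw [Real.dist_eq, abs_lt] at hdist
          rw [heq]
          linarith [hdist.2]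
        have hne : {T : ℝ | 0 ≤ T ∧ V (T + ε) T ∉ C}.Nonempty := ⟨T₀, hT₀0, hT₀⟩
        obtain ⟨T, hT, hTlt⟩ := exists_lt_of_csInf_lt hne
          (lt_add_of_pos_right (sInf {T : ℝ | 0 ≤ T ∧ V (T + ε) T ∉ C}) hε0)
        have hTub : T < TΛ + η + ε := by linarith
        -- T must lie strictly beyond TΛ
        have hTgt : TΛ < T := by
          by_contra hle
          push_neg at hle
          rcases le_or_gt (T + ε) TΛ with h1 | h1
          · exact hT.2 (hA T (T + ε) hT.1 (by linarith) h1)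
          · refine hT.2 ?_
            rw [hcomp T TΛ (T + ε) hT.1 hle h1.le]
            exact hC _ _ (hB _ (by linarith)) (hA T TΛ hT.1 hle le_rfl)
        refine ⟨T - TΛ, by linarith, ?_, ?_, ?_⟩
        · have e3 : (3 : ℝ) / ((n : ℝ) + 1) = 3 * η := by
            rw [hηdef]; ring
          rw [e3]; linarith
        all_goals {
          have eT : TΛ + (T - TΛ) = T := by ring
          simp only [eT]
          have hmem : T + ε ∈ {T' : ℝ | T ≤ T' ∧ V T' T ∉ C} :=
            ⟨by linarith, hT.2⟩
          have hbdd : BddBelow {T' : ℝ | T ≤ T' ∧ V T' T ∉ C} :=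
            ⟨T, fun y hy => hy.1⟩
          first
          | · refine le_csInf ⟨T + ε, hmem⟩ fun y hy => ?_
              have := hy.1
              linarith
          | · have h1 : sInf {T' : ℝ | T ≤ T' ∧ V T' T ∉ C} ≤ T + ε :=
                csInf_le hbdd hmem
              have e3 : (3 : ℝ) / ((n : ℝ) + 1) = 3 * η := by
                rw [hηdef]; ring
              rw [e3]
              linarith
        }
      choose d hd0 hdle hfl hfu using key
      have hdtend : Filter.Tendsto d Filter.atTop (nhds 0) :=
        squeeze_zero (fun n => (hd0 n).le) hdle h3tend
      have hdIoi : Filter.Tendsto d Filter.atTop (nhdsWithin (0 : ℝ) (Set.Ioi 0)) :=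
        tendsto_nhdsWithin_iff.mpr ⟨hdtend, Filter.Eventually.of_forall hd0⟩
      have hcl : Filter.Tendsto
          (fun n : ℕ => sInf {T : ℝ | TΛ + d n ≤ T ∧ V T (TΛ + d n) ∉ C})
          Filter.atTop (nhds tΛ) := ht.comp hdIoi
      have hupper : Filter.Tendsto (fun n : ℕ => TΛ + 3 / ((n : ℝ) + 1))
          Filter.atTop (nhds TΛ) := by
        simpa using h3tend.const_add TΛ
      have hsq : Filter.Tendsto
          (fun n : ℕ => sInf {T : ℝ | TΛ + d n ≤ T ∧ V T (TΛ + d n) ∉ C})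
          Filter.atTop (nhds TΛ) :=
        tendsto_of_tendsto_of_tendsto_of_le_of_le tendsto_const_nhds hupper hfl hfu
      exact tendsto_nhds_unique hcl hsq
  exact ⟨heq, (hfin.trans heq).symm⟩
end

section
/- Let Λ be an NNM depolarizing evolution with characteristic function f, useless-noise cutoff T^Λ with f(T^Λ) ∈ (0,1), and total revival Δ > 0. Its PNM core is the depolarizing evolution with characteristic function f̄(t) = f(t+T^Λ)/f(T^Λ), and the trace-distance flux measures satisfy M^D(Λ̄) = 2Δ/f(T^Λ) > M^D(Λ) = 2Δ. -/
open scoped ComplexOrder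
open MeasureTheory

/-- Trace norm `‖A‖₁ = Tr √(AᴴA)`. -/
noncomputable def traceNorm {d : ℕ} (A : Matrix (Fin d) (Fin d) ℂ) : ℝ :=
  ∑ i, Real.sqrt ((Matrix.posSemidef_conjTranspose_mul_self A).1.eigenvalues i)

/-- Depolarizing map `Λ(ρ) = r ρ + (1−r) Tr(ρ) 𝟙/d`. -/
noncomputable def depol (d : ℕ) (r : ℝ) (ρ : Matrix (Fin d) (Fin d) ℂ) :
    Matrix (Fin d) (Fin d) ℂ :=
  (r : ℂ) • ρ + ((1 - r : ℝ) : ℂ) • ρ.trace • ((d : ℂ)⁻¹ • (1 : Matrix (Fin d) (Fin d) ℂ))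

/-- Trace-distance flux for a pair of states under the depolarizing evolution `f`. -/
noncomputable def fluxD (d : ℕ) (f : ℝ → ℝ) (ρ₁ ρ₂ : Matrix (Fin d) (Fin d) ℂ)
    (u : ℝ) : ℝ :=
  deriv (fun v => traceNorm (depol d (f v) ρ₁ - depol d (f v) ρ₂)) u

/-- Trace-distance flux non-Markovianity measure for the depolarizing evolution `f`. -/
noncomputable def MD (d : ℕ) (f : ℝ → ℝ) : ℝ :=
  sSup {x : ℝ | ∃ ρ₁ ρ₂ : Matrix (Fin d) (Fin d) ℂ,
    ρ₁.PosSemidef ∧ ρ₁.trace = 1 ∧ ρ₂.PosSemidef ∧ ρ₂.trace = 1 ∧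
    x = ∫ u in {u : ℝ | 0 ≤ u ∧ 0 < fluxD d f ρ₁ ρ₂ u}, fluxD d f ρ₁ ρ₂ u}

lemma trace_udu {d : ℕ} (U : Matrix.unitaryGroup (Fin d) ℂ) (ν : Fin d → ℝ) :
    ((U : Matrix (Fin d) (Fin d) ℂ) * Matrix.diagonal (Complex.ofReal ∘ ν) *
      star (U : Matrix (Fin d) (Fin d) ℂ)).trace = ((∑ i, ν i : ℝ) : ℂ) := by
  rw [Matrix.trace_mul_cycle]
  rw [(Matrix.UnitaryGroup.star_mul_self U : star (U : Matrix (Fin d) (Fin d) ℂ) * U = 1)]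
  simp [Matrix.trace_diagonal]

lemma udu_conj_mul {d : ℕ} (U : Matrix.unitaryGroup (Fin d) ℂ) (μ ν : Fin d → ℝ) :
    ((U : Matrix (Fin d) (Fin d) ℂ) * Matrix.diagonal (Complex.ofReal ∘ μ) *
        star (U : Matrix (Fin d) (Fin d) ℂ)) *
      ((U : Matrix (Fin d) (Fin d) ℂ) * Matrix.diagonal (Complex.ofReal ∘ ν) *
        star (U : Matrix (Fin d) (Fin d) ℂ)) =
    (U : Matrix (Fin d) (Fin d) ℂ) * Matrix.diagonal (Complex.ofReal ∘ fun i => μ i * ν i) *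
      star (U : Matrix (Fin d) (Fin d) ℂ) := by
  have h : star (U : Matrix (Fin d) (Fin d) ℂ) * (U : Matrix (Fin d) (Fin d) ℂ) = 1 :=
    Matrix.UnitaryGroup.star_mul_self U
  have e1 : ((U : Matrix (Fin d) (Fin d) ℂ) * Matrix.diagonal (Complex.ofReal ∘ μ) *
        star (U : Matrix (Fin d) (Fin d) ℂ)) *
      ((U : Matrix (Fin d) (Fin d) ℂ) * Matrix.diagonal (Complex.ofReal ∘ ν) *
        star (U : Matrix (Fin d) (Fin d) ℂ)) =
      (U : Matrix (Fin d) (Fin d) ℂ) * Matrix.diagonal (Complex.ofReal ∘ μ) *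
        ((star (U : Matrix (Fin d) (Fin d) ℂ) * (U : Matrix (Fin d) (Fin d) ℂ)) *
        (Matrix.diagonal (Complex.ofReal ∘ ν) * star (U : Matrix (Fin d) (Fin d) ℂ))) := by
    noncomm_ring
  rw [e1, h, one_mul, ← mul_assoc,
    mul_assoc (U : Matrix (Fin d) (Fin d) ℂ) (Matrix.diagonal (Complex.ofReal ∘ μ))
      (Matrix.diagonal (Complex.ofReal ∘ ν)), Matrix.diagonal_mul_diagonal]
  congr 2
  ext i j
  by_cases hij : i = j <;> simp [Matrix.diagonal_apply, hij]

lemma psd_udu {d : ℕ} (U : Matrix.unitaryGroup (Fin d) ℂ) {μ : Fin d → ℝ}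
    (hμ : ∀ i, 0 ≤ μ i) :
    (((U : Matrix (Fin d) (Fin d) ℂ) * Matrix.diagonal (Complex.ofReal ∘ μ) *
      star (U : Matrix (Fin d) (Fin d) ℂ))).PosSemidef := by
  rw [Matrix.star_eq_conjTranspose]
  refine Matrix.PosSemidef.mul_mul_conjTranspose_same ?_ _
  refine Matrix.posSemidef_diagonal_iff.mpr fun i => ?_
  rw [Function.comp_apply, Complex.zero_le_real]
  exact hμ i

lemma herm_udu {d : ℕ} (U : Matrix.unitaryGroup (Fin d) ℂ) (μ : Fin d → ℝ) :
    (((U : Matrix (Fin d) (Fin d) ℂ) * Matrix.diagonal (Complex.ofReal ∘ μ) *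
      star (U : Matrix (Fin d) (Fin d) ℂ))).IsHermitian := by
  have hD : (Matrix.diagonal (Complex.ofReal ∘ μ)).IsHermitian := by
    ext i j
    rcases eq_or_ne i j with h | h <;>
      simp [Matrix.conjTranspose_apply, Matrix.diagonal_apply, h, eq_comm,
        Complex.conj_ofReal]
  rw [Matrix.star_eq_conjTranspose]
  exact Matrix.isHermitian_mul_mul_conjTranspose _ hD

open scoped MatrixOrder in
lemma traceNorm_udu {d : ℕ} (U : Matrix.unitaryGroup (Fin d) ℂ) (μ : Fin d → ℝ) :
    traceNorm ((U : Matrix (Fin d) (Fin d) ℂ) * Matrix.diagonal (Complex.ofReal ∘ μ) *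
      star (U : Matrix (Fin d) (Fin d) ℂ)) = ∑ i, |μ i| := by
  set V : Matrix (Fin d) (Fin d) ℂ := (U : Matrix (Fin d) (Fin d) ℂ) with hV
  set A : Matrix (Fin d) (Fin d) ℂ := V * Matrix.diagonal (Complex.ofReal ∘ μ) * star V with hA
  have hM : (A.conjTranspose * A).PosSemidef := Matrix.posSemidef_conjTranspose_mul_self A
  -- A.conjTranspose = U diag μ Uᴴ  (A is hermitian)
  have hAh : A.conjTranspose = A := herm_udu U μ
  have hMe : A.conjTranspose * A = V * Matrix.diagonal (Complex.ofReal ∘ fun i => μ i * μ i) * star V := by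
    rw [hAh, hA, udu_conj_mul]
  -- N := U diag |μ| Uᴴ is the psd sqrt of Aᴴ A
  set N : Matrix (Fin d) (Fin d) ℂ :=
    V * Matrix.diagonal (Complex.ofReal ∘ fun i => |μ i|) * star V with hN
  have hNpsd : N.PosSemidef := psd_udu U fun i => abs_nonneg _
  have hNsq : N ^ 2 = A.conjTranspose * A := by
    rw [pow_two, hN, udu_conj_mul, hMe]
    congr 2
    funext i
    simp [abs_mul_abs_self]
  have hNsqrt : N = CFC.sqrt (A.conjTranspose * A) := by
    rw [eq_comm, CFC.sqrt_eq_iff _ _ hM.nonneg hNpsd.nonneg, ← sq, hNsq]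
  -- traces
  have ht1 : (CFC.sqrt (A.conjTranspose * A)).trace = ((∑ i, |μ i| : ℝ) : ℂ) := by
    rw [← hNsqrt, hN, trace_udu U (fun i => |μ i|)]
  have ht2 : (CFC.sqrt (A.conjTranspose * A)).trace =
      ((∑ i, Real.sqrt (hM.1.eigenvalues i) : ℝ) : ℂ) := by
    rw [CFC.sqrt_eq_cfc, cfc_nnreal_eq_real _ _ hM.nonneg, hM.1.cfc_eq, Matrix.IsHermitian.cfc,
      Unitary.conjStarAlgAut_apply]
    refine (congrArg Matrix.trace (congrArg (fun D => _ * D * _) (congrArg Matrix.diagonal ?_))).trans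
      (trace_udu hM.1.eigenvectorUnitary (fun i => Real.sqrt (hM.1.eigenvalues i)))
    funext i
    simp [hM.eigenvalues_nonneg i]
  have := ht1.symm.trans ht2
  have hreal : (∑ i, |μ i| : ℝ) = ∑ i, Real.sqrt (hM.1.eigenvalues i) :=
    Complex.ofReal_inj.mp this
  rw [traceNorm]
  exact hreal.symm

lemma ofReal_comp_eq {d : ℕ} (μ : Fin d → ℝ) :
    (RCLike.ofReal ∘ μ : Fin d → ℂ) = Complex.ofReal ∘ μ := rfl

lemma traceNorm_hermitian {d : ℕ} {A : Matrix (Fin d) (Fin d) ℂ} (hA : A.IsHermitian) :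
    traceNorm A = ∑ i, |hA.eigenvalues i| := by
  conv_lhs => rw [hA.spectral_theorem, ofReal_comp_eq]
  exact traceNorm_udu hA.eigenvectorUnitary hA.eigenvalues

lemma smul_udu {d : ℕ} (r : ℝ) (U : Matrix.unitaryGroup (Fin d) ℂ) (μ : Fin d → ℝ) :
    (r : ℂ) • ((U : Matrix (Fin d) (Fin d) ℂ) * Matrix.diagonal (Complex.ofReal ∘ μ) *
      star (U : Matrix (Fin d) (Fin d) ℂ)) =
    (U : Matrix (Fin d) (Fin d) ℂ) * Matrix.diagonal (Complex.ofReal ∘ fun i => r * μ i) *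
      star (U : Matrix (Fin d) (Fin d) ℂ) := by
  rw [← smul_mul_assoc, ← mul_smul_comm]
  congr 2
  ext i j
  rcases eq_or_ne i j with h | h <;> simp [Matrix.diagonal_apply, h]

lemma traceNorm_smul_hermitian {d : ℕ} {A : Matrix (Fin d) (Fin d) ℂ} (hA : A.IsHermitian)
    (r : ℝ) : traceNorm ((r : ℂ) • A) = |r| * traceNorm A := by
  conv_lhs => rw [hA.spectral_theorem, Unitary.conjStarAlgAut_apply, ofReal_comp_eq, smul_udu]
  rw [traceNorm_udu, traceNorm_hermitian hA, Finset.mul_sum]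
  congr 1
  funext i
  rw [abs_mul]

lemma psd_trace_nonneg {d : ℕ} {P : Matrix (Fin d) (Fin d) ℂ} (hP : P.PosSemidef) :
    0 ≤ P.trace := by
  rw [Matrix.trace]
  refine Finset.sum_nonneg fun i _ => ?_
  have := hP.dotProduct_mulVec_nonneg (Pi.single i 1)
  simpa [dotProduct, Matrix.mulVec, Pi.single_apply, Finset.sum_ite_eq,
    Matrix.diag] using this

open scoped MatrixOrder in
lemma psd_mul_trace_nonneg {d : ℕ} {P ρ : Matrix (Fin d) (Fin d) ℂ}
    (hP : P.PosSemidef) (hρ : ρ.PosSemidef) : 0 ≤ (P * ρ).trace := by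
  obtain ⟨B, hB⟩ : ∃ B : Matrix (Fin d) (Fin d) ℂ, P = B.conjTranspose * B :=
    ⟨CFC.sqrt P, by rw [← Matrix.star_eq_conjTranspose, (CFC.sqrt_nonneg P).isSelfAdjoint.star_eq, CFC.sqrt_mul_sqrt_self P hP.nonneg]⟩
  rw [hB, Matrix.mul_assoc, Matrix.trace_mul_comm]
  exact psd_trace_nonneg (hρ.mul_mul_conjTranspose_same B)

lemma traceNorm_sub_le_two {d : ℕ} {ρ₁ ρ₂ : Matrix (Fin d) (Fin d) ℂ}
    (h₁ : ρ₁.PosSemidef) (ht₁ : ρ₁.trace = 1) (h₂ : ρ₂.PosSemidef) (ht₂ : ρ₂.trace = 1) :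
    traceNorm (ρ₁ - ρ₂) ≤ 2 := by
  set A := ρ₁ - ρ₂ with hAdef
  have hA : A.IsHermitian := h₁.1.sub h₂.1
  set lam := hA.eigenvalues with hlam
  set U := hA.eigenvectorUnitary with hU
  set s : Fin d → ℝ := fun i => if 0 ≤ lam i then 1 else -1 with hs
  set W : Matrix (Fin d) (Fin d) ℂ :=
    (U : Matrix (Fin d) (Fin d) ℂ) * Matrix.diagonal (Complex.ofReal ∘ s) *
      star (U : Matrix (Fin d) (Fin d) ℂ) with hW
  have hone : (U : Matrix (Fin d) (Fin d) ℂ) * Matrix.diagonal (Complex.ofReal ∘ fun _ => (1:ℝ)) *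
      star (U : Matrix (Fin d) (Fin d) ℂ) = 1 := by
    have h1 : (Complex.ofReal ∘ fun _ : Fin d => (1:ℝ)) = fun _ => (1:ℂ) := by
      funext i; simp
    rw [h1, Matrix.diagonal_one, mul_one]
    exact Matrix.mem_unitaryGroup_iff.mp U.2
  have h1W : (1 - W).PosSemidef := by
    have : (1 : Matrix (Fin d) (Fin d) ℂ) - W =
        (U : Matrix (Fin d) (Fin d) ℂ) * Matrix.diagonal (Complex.ofReal ∘ fun i => 1 - s i) *
          star (U : Matrix (Fin d) (Fin d) ℂ) := by
      rw [← hone, hW]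
      have hfun : (fun i => (Complex.ofReal ∘ fun _ : Fin d => (1:ℝ)) i - (Complex.ofReal ∘ s) i) =
          (Complex.ofReal ∘ fun i => 1 - s i) := by
        funext i; simp
      rw [← Matrix.sub_mul, ← Matrix.mul_sub, Matrix.diagonal_sub, hfun]
    rw [this]
    refine psd_udu U fun i => ?_
    by_cases h : 0 ≤ lam i <;> simp [hs, h]
  have h2W : (1 + W).PosSemidef := by
    have : (1 : Matrix (Fin d) (Fin d) ℂ) + W =
        (U : Matrix (Fin d) (Fin d) ℂ) * Matrix.diagonal (Complex.ofReal ∘ fun i => 1 + s i) *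
          star (U : Matrix (Fin d) (Fin d) ℂ) := by
      rw [← hone, hW]
      have hfun : (fun i => (Complex.ofReal ∘ fun _ : Fin d => (1:ℝ)) i + (Complex.ofReal ∘ s) i) =
          (Complex.ofReal ∘ fun i => 1 + s i) := by
        funext i; simp
      rw [← Matrix.add_mul, ← Matrix.mul_add, Matrix.diagonal_add, hfun]
    rw [this]
    refine psd_udu U fun i => ?_
    by_cases h : 0 ≤ lam i <;> simp [hs, h]
  have hWA : (W * A).trace = ((∑ i, |lam i| : ℝ) : ℂ) := by
    have hAspec : A = (U : Matrix (Fin d) (Fin d) ℂ) * Matrix.diagonal (Complex.ofReal ∘ lam) *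
        star (U : Matrix (Fin d) (Fin d) ℂ) := by
      conv_lhs => rw [hA.spectral_theorem]
      rfl
    rw [hW]
    conv_lhs => rw [hAspec]
    rw [udu_conj_mul, trace_udu]
    congr 1
    refine Finset.sum_congr rfl fun i _ => ?_
    by_cases h : 0 ≤ lam i
    · simp [hs, h, abs_of_nonneg h]
    · push_neg at h
      simp [hs, not_le.mpr h, abs_of_neg h]
  -- trace inequalities
  have hup : (W * ρ₁).trace ≤ 1 := by
    have h0 : 0 ≤ ((1 - W) * ρ₁).trace := psd_mul_trace_nonneg h1W h₁
    rw [Matrix.sub_mul, Matrix.trace_sub, Matrix.one_mul, ht₁, sub_nonneg] at h0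
    exact h0
  have hlo : -1 ≤ (W * ρ₂).trace := by
    have h0 : 0 ≤ ((1 + W) * ρ₂).trace := psd_mul_trace_nonneg h2W h₂
    rw [Matrix.add_mul, Matrix.trace_add, Matrix.one_mul, ht₂] at h0
    calc (-1 : ℂ) = 0 - 1 := by ring
      _ ≤ (1 + (W * ρ₂).trace) - 1 := sub_le_sub_right h0 1
      _ = (W * ρ₂).trace := by ring
  have hsplit : (W * A).trace = (W * ρ₁).trace - (W * ρ₂).trace := by
    rw [hAdef, Matrix.mul_sub, Matrix.trace_sub]
  have h2 : (W * A).trace ≤ 2 := by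
    rw [hsplit]
    calc (W * ρ₁).trace - (W * ρ₂).trace ≤ 1 - (-1) := by
          exact sub_le_sub hup hlo
      _ = 2 := by norm_num
  rw [hWA] at h2
  have : (∑ i, |lam i| : ℝ) ≤ 2 := by
    have := Complex.real_le_real.mp (by exact_mod_cast h2)
    exact this
  rw [traceNorm_hermitian hA]
  exact this

lemma exists_orth_states {d : ℕ} (hd : 1 < d) :
    ∃ ρ₁ ρ₂ : Matrix (Fin d) (Fin d) ℂ, ρ₁.PosSemidef ∧ ρ₁.trace = 1 ∧
      ρ₂.PosSemidef ∧ ρ₂.trace = 1 ∧ traceNorm (ρ₁ - ρ₂) = 2 := by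
  have hd0 : 0 < d := by omega
  set a : Fin d := ⟨0, hd0⟩ with ha
  set b : Fin d := ⟨1, hd⟩ with hb
  have hab : a ≠ b := by simp [ha, hb, Fin.ext_iff]
  set ρ₁ : Matrix (Fin d) (Fin d) ℂ := Matrix.diagonal (fun i => if i = a then 1 else 0) with hρ₁
  set ρ₂ : Matrix (Fin d) (Fin d) ℂ := Matrix.diagonal (fun i => if i = b then 1 else 0) with hρ₂
  refine ⟨ρ₁, ρ₂, ?_, ?_, ?_, ?_, ?_⟩
  · refine Matrix.posSemidef_diagonal_iff.mpr fun i => ?_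
    by_cases h : i = a <;> simp [h]
  · rw [hρ₁, Matrix.trace_diagonal]
    simp [Finset.sum_ite_eq']
  · refine Matrix.posSemidef_diagonal_iff.mpr fun i => ?_
    by_cases h : i = b <;> simp [h]
  · rw [hρ₂, Matrix.trace_diagonal]
    simp [Finset.sum_ite_eq']
  · set μ : Fin d → ℝ := fun i => if i = a then 1 else if i = b then -1 else 0 with hμ
    have hdiff : ρ₁ - ρ₂ = (1 : Matrix.unitaryGroup (Fin d) ℂ) *
        Matrix.diagonal (Complex.ofReal ∘ μ) * star ((1 : Matrix.unitaryGroup (Fin d) ℂ) :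
          Matrix (Fin d) (Fin d) ℂ) := by
      have h1 : ((1 : Matrix.unitaryGroup (Fin d) ℂ) : Matrix (Fin d) (Fin d) ℂ) = 1 := rfl
      have hfun2 : (fun i => (if i = a then (1:ℂ) else 0) - if i = b then (1:ℂ) else 0) =
          Complex.ofReal ∘ μ := by
        funext i
        rcases eq_or_ne i a with rfl | h
        · simp [hμ, hab]
        · rcases eq_or_ne i b with rfl | h2
          · simp [hμ, h]
          · simp [hμ, h, h2]
      rw [h1, one_mul, star_one, mul_one, hρ₁, hρ₂, Matrix.diagonal_sub, hfun2]
    rw [hdiff, traceNorm_udu]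
    have habs : ∀ i, |μ i| = (if i = a then (1:ℝ) else 0) + (if i = b then 1 else 0) := by
      intro i
      rcases eq_or_ne i a with rfl | h
      · simp [hμ, hab]
      · rcases eq_or_ne i b with rfl | h2
        · simp [hμ, h]
        · simp [hμ, h, h2]
    rw [Finset.sum_congr rfl fun i _ => habs i, Finset.sum_add_distrib]
    simp [Finset.sum_ite_eq']
    norm_num

lemma traceNorm_nonneg {d : ℕ} (A : Matrix (Fin d) (Fin d) ℂ) : 0 ≤ traceNorm A :=
  Finset.sum_nonneg fun i _ => Real.sqrt_nonneg _

lemma depol_sub {d : ℕ} (r : ℝ) {ρ₁ ρ₂ : Matrix (Fin d) (Fin d) ℂ}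
    (htr : ρ₁.trace = ρ₂.trace) :
    depol d r ρ₁ - depol d r ρ₂ = (r : ℂ) • (ρ₁ - ρ₂) := by
  unfold depol
  rw [htr]
  module

lemma flux_eq {d : ℕ} (g : ℝ → ℝ) {u : ℝ} (hgdiff : DifferentiableAt ℝ g u)
    (hgpos : 0 < g u) {ρ₁ ρ₂ : Matrix (Fin d) (Fin d) ℂ}
    (hA : (ρ₁ - ρ₂).IsHermitian) (htr : ρ₁.trace = ρ₂.trace) :
    fluxD d g ρ₁ ρ₂ u = traceNorm (ρ₁ - ρ₂) * deriv g u := by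
  have hev : ∀ᶠ v in nhds u, 0 < g v :=
    hgdiff.continuousAt.eventually (eventually_gt_nhds hgpos)
  have heq : (fun v => traceNorm (depol d (g v) ρ₁ - depol d (g v) ρ₂)) =ᶠ[nhds u]
      fun v => traceNorm (ρ₁ - ρ₂) * g v := by
    filter_upwards [hev] with v hv
    rw [depol_sub _ htr, traceNorm_smul_hermitian hA, abs_of_pos hv, mul_comm]
  rw [fluxD, heq.deriv_eq, deriv_const_mul _ hgdiff]

lemma integral_flux {d : ℕ} {g : ℝ → ℝ} (hgdiff : ∀ u, 0 ≤ u → DifferentiableAt ℝ g u)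
    (hgpos : ∀ u, 0 ≤ u → 0 < g u) {ρ₁ ρ₂ : Matrix (Fin d) (Fin d) ℂ}
    (h₁ : ρ₁.PosSemidef) (ht₁ : ρ₁.trace = 1) (h₂ : ρ₂.PosSemidef) (ht₂ : ρ₂.trace = 1) :
    ∫ u in {u : ℝ | 0 ≤ u ∧ 0 < fluxD d g ρ₁ ρ₂ u}, fluxD d g ρ₁ ρ₂ u =
      traceNorm (ρ₁ - ρ₂) * ∫ u in {u : ℝ | 0 ≤ u ∧ 0 < deriv g u}, deriv g u := by
  have hA : (ρ₁ - ρ₂).IsHermitian := h₁.1.sub h₂.1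
  have htr : ρ₁.trace = ρ₂.trace := by rw [ht₁, ht₂]
  set c := traceNorm (ρ₁ - ρ₂) with hc
  have hflux : ∀ u, 0 ≤ u → fluxD d g ρ₁ ρ₂ u = c * deriv g u := fun u hu =>
    flux_eq g (hgdiff u hu) (hgpos u hu) hA htr
  have hSm : MeasurableSet {u : ℝ | 0 ≤ u ∧ 0 < deriv g u} := by
    have : {u : ℝ | 0 ≤ u ∧ 0 < deriv g u} = Set.Ici 0 ∩ deriv g ⁻¹' Set.Ioi 0 := by
      ext u; simp [Set.mem_Ici, Set.mem_Ioi, Set.mem_inter_iff]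
    rw [this]
    exact measurableSet_Ici.inter (measurable_deriv g measurableSet_Ioi)
  rcases eq_or_lt_of_le (traceNorm_nonneg (ρ₁ - ρ₂)) with hc0 | hc0
  · have hempty : {u : ℝ | 0 ≤ u ∧ 0 < fluxD d g ρ₁ ρ₂ u} = ∅ := by
      ext u
      simp only [Set.mem_setOf_eq, Set.mem_empty_iff_false, iff_false, not_and]
      intro hu
      rw [hflux u hu, hc, ← hc0]
      simp
    rw [hempty, hc, ← hc0]
    simp
  · have hset : {u : ℝ | 0 ≤ u ∧ 0 < fluxD d g ρ₁ ρ₂ u} = {u : ℝ | 0 ≤ u ∧ 0 < deriv g u} := by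
      ext u
      simp only [Set.mem_setOf_eq]
      constructor
      · rintro ⟨hu, hp⟩
        rw [hflux u hu] at hp
        exact ⟨hu, by nlinarith⟩
      · rintro ⟨hu, hp⟩
        rw [hflux u hu]
        exact ⟨hu, mul_pos hc0 hp⟩
    rw [hset, MeasureTheory.setIntegral_congr_fun hSm (fun u hu => hflux u hu.1),
      MeasureTheory.integral_const_mul]

lemma MD_eq {d : ℕ} (hd : 1 < d) {g : ℝ → ℝ} (hgdiff : ∀ u, 0 ≤ u → DifferentiableAt ℝ g u)
    (hgpos : ∀ u, 0 ≤ u → 0 < g u) :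
    MD d g = 2 * ∫ u in {u : ℝ | 0 ≤ u ∧ 0 < deriv g u}, deriv g u := by
  set δ := ∫ u in {u : ℝ | 0 ≤ u ∧ 0 < deriv g u}, deriv g u with hδ
  have hSm : MeasurableSet {u : ℝ | 0 ≤ u ∧ 0 < deriv g u} := by
    have : {u : ℝ | 0 ≤ u ∧ 0 < deriv g u} = Set.Ici 0 ∩ deriv g ⁻¹' Set.Ioi 0 := by
      ext u; simp [Set.mem_Ici, Set.mem_Ioi, Set.mem_inter_iff]
    rw [this]
    exact measurableSet_Ici.inter (measurable_deriv g measurableSet_Ioi)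
  have hδ0 : 0 ≤ δ := MeasureTheory.setIntegral_nonneg hSm fun u hu => le_of_lt hu.2
  rw [MD]
  refine IsGreatest.csSup_eq ⟨?_, ?_⟩
  · obtain ⟨ρ₁, ρ₂, hp₁, htr₁, hp₂, htr₂, htn⟩ := exists_orth_states hd
    refine ⟨ρ₁, ρ₂, hp₁, htr₁, hp₂, htr₂, ?_⟩
    rw [integral_flux hgdiff hgpos hp₁ htr₁ hp₂ htr₂, htn]
  · rintro x ⟨ρ₁, ρ₂, hp₁, htr₁, hp₂, htr₂, rfl⟩
    rw [integral_flux hgdiff hgpos hp₁ htr₁ hp₂ htr₂]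
    exact mul_le_mul_of_nonneg_right (traceNorm_sub_le_two hp₁ htr₁ hp₂ htr₂) hδ0

lemma deriv_nonpos_of_antitoneOn {f : ℝ → ℝ} {T u : ℝ} (hmono : AntitoneOn f (Set.Icc 0 T))
    (hu : 0 ≤ u) (huT : u < T) (hd : DifferentiableAt ℝ f u) : deriv f u ≤ 0 := by
  have hslope : Filter.Tendsto (slope f u) (nhdsWithin u {u}ᶜ) (nhds (deriv f u)) :=
    hasDerivAt_iff_tendsto_slope.mp hd.hasDerivAt
  have hsub : nhdsWithin u (Set.Ioi u) ≤ nhdsWithin u {u}ᶜ :=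
    nhdsWithin_mono u fun v hv => ne_of_gt hv
  have htend : Filter.Tendsto (slope f u) (nhdsWithin u (Set.Ioi u)) (nhds (deriv f u)) :=
    hslope.mono_left hsub
  have hev : ∀ᶠ v in nhdsWithin u (Set.Ioi u), slope f u v ≤ 0 := by
    filter_upwards [Ioo_mem_nhdsGT_of_mem (Set.mem_Ico.mpr ⟨le_refl u, huT⟩)] with v hv
    rw [slope_def_field]
    have hfv : f v ≤ f u := hmono ⟨hu, huT.le⟩ ⟨le_trans hu hv.1.le, hv.2.le⟩ hv.1.le
    have : v - u > 0 := by linarith [hv.1]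
    rw [div_eq_mul_inv]
    exact mul_nonpos_of_nonpos_of_nonneg (by linarith) (by positivity)
  exact le_of_tendsto htend hev

lemma shift_integral {f : ℝ → ℝ} (TΛ : ℝ) :
    ∫ u in {u : ℝ | 0 ≤ u ∧ 0 < deriv f (u + TΛ)}, deriv f (u + TΛ) =
    ∫ w in {w : ℝ | TΛ ≤ w ∧ 0 < deriv f w}, deriv f w := by
  set T : Set ℝ := {w : ℝ | TΛ ≤ w ∧ 0 < deriv f w} with hT
  set S : Set ℝ := {u : ℝ | 0 ≤ u ∧ 0 < deriv f (u + TΛ)} with hS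
  have hTm : MeasurableSet T := by
    have : T = Set.Ici TΛ ∩ deriv f ⁻¹' Set.Ioi 0 := by
      ext w
      simp only [Set.mem_inter_iff, Set.mem_Ici, Set.mem_preimage, Set.mem_Ioi]
      exact Iff.rfl
    rw [this]
    exact measurableSet_Ici.inter (measurable_deriv f measurableSet_Ioi)
  have hSm : MeasurableSet S := by
    have : S = Set.Ici 0 ∩ (fun u => deriv f (u + TΛ)) ⁻¹' Set.Ioi 0 := by
      ext u
      simp only [Set.mem_inter_iff, Set.mem_Ici, Set.mem_preimage, Set.mem_Ioi]
      exact Iff.rfl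
    rw [this]
    exact measurableSet_Ici.inter
      (((measurable_deriv f).comp (measurable_id.add_const TΛ)) measurableSet_Ioi)
  rw [← MeasureTheory.integral_indicator hTm, ← MeasureTheory.integral_indicator hSm]
  rw [← MeasureTheory.integral_add_right_eq_self (Set.indicator T (deriv f)) TΛ]
  congr 1
  funext u
  have hmem : u ∈ S ↔ u + TΛ ∈ T := by
    simp only [hS, hT, Set.mem_setOf_eq, le_add_iff_nonneg_left]
  by_cases h : u ∈ S
  · rw [Set.indicator_of_mem (hmem.mp h), Set.indicator_of_mem h]
  · rw [Set.indicator_of_notMem (fun hc => h (hmem.mpr hc)), Set.indicator_of_notMem h]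

/-- For an NNM depolarizing evolution with characteristic function `f`,
useless-noise cutoff `TΛ` (with `f TΛ ∈ (0,1)`) and total revival `Δ > 0`, the PNM core
has characteristic function `f̄(t) = f(t+TΛ)/f(TΛ)` and
`M^D(Λ̄) = 2Δ/f(TΛ) > M^D(Λ) = 2Δ`. -/
theorem stmt16 {d : ℕ} (hd : 1 < d) (f : ℝ → ℝ) (TΛ Δ : ℝ)
    (hf : ContinuousOn f (Set.Ici 0)) (hf0 : f 0 = 1)
    (hrange : ∀ u, 0 ≤ u → f u ∈ Set.Ioc (0 : ℝ) 1)
    (hdiff : ∀ u, 0 ≤ u → DifferentiableAt ℝ f u)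
    (hTΛ : 0 ≤ TΛ) (hfTΛ : f TΛ ∈ Set.Ioo (0 : ℝ) 1)
    (hmono : AntitoneOn f (Set.Icc 0 TΛ))
    (hdom : ∀ u, TΛ ≤ u → f u ≤ f TΛ)
    (hmax : ∀ T, 0 ≤ T → AntitoneOn f (Set.Icc 0 T) → (∀ u, T ≤ u → f u ≤ f T) →
      f T ≠ 1 → T ≤ TΛ)
    (hΔ : Δ = ∫ u in {u : ℝ | 0 ≤ u ∧ 0 < deriv f u}, deriv f u) (hΔpos : 0 < Δ) :
    MD d (fun u => f (u + TΛ) / f TΛ) = 2 * Δ / f TΛ ∧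
    MD d f = 2 * Δ ∧
    MD d f < MD d (fun u => f (u + TΛ) / f TΛ) := by
  have hfT : 0 < f TΛ := hfTΛ.1
  have hfT1 : f TΛ < 1 := hfTΛ.2
  -- MD for f
  have hMDf : MD d f = 2 * Δ := by
    rw [MD_eq hd hdiff (fun u hu => (hrange u hu).1), ← hΔ]
  -- differentiability and positivity of the rescaled function
  have hdiffb : ∀ u, 0 ≤ u → DifferentiableAt ℝ (fun u => f (u + TΛ) / f TΛ) u := by
    intro u hu
    have h1 : DifferentiableAt ℝ (fun v => f (v + TΛ)) u :=
      DifferentiableAt.comp u (hdiff (u + TΛ) (by linarith)) (differentiableAt_id.add_const TΛ)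
    exact h1.div_const _
  have hposb : ∀ u, 0 ≤ u → 0 < f (u + TΛ) / f TΛ := fun u hu =>
    div_pos (hrange (u + TΛ) (by linarith)).1 hfT
  -- derivative of the rescaled function
  have hderivb : deriv (fun u => f (u + TΛ) / f TΛ) = fun u => deriv f (u + TΛ) / f TΛ := by
    funext u
    rw [deriv_div_const, deriv_comp_add_const]
  -- the set for the rescaled function
  have hSb : {u : ℝ | 0 ≤ u ∧ 0 < deriv (fun u => f (u + TΛ) / f TΛ) u} =
      {u : ℝ | 0 ≤ u ∧ 0 < deriv f (u + TΛ)} := by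
    ext u
    rw [hderivb]
    simp only [Set.mem_setOf_eq]
    constructor
    · rintro ⟨h1, h2⟩
      refine ⟨h1, ?_⟩
      have := mul_pos h2 hfT
      rwa [div_mul_cancel₀ _ (ne_of_gt hfT)] at this
    · rintro ⟨h1, h2⟩
      exact ⟨h1, div_pos h2 hfT⟩
  -- S = T (the sets coincide exactly)
  have hST : {u : ℝ | 0 ≤ u ∧ 0 < deriv f u} = {w : ℝ | TΛ ≤ w ∧ 0 < deriv f w} := by
    ext u
    simp only [Set.mem_setOf_eq]
    constructor
    · rintro ⟨h1, h2⟩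
      refine ⟨?_, h2⟩
      by_contra hlt
      push_neg at hlt
      exact absurd h2 (not_lt.mpr (deriv_nonpos_of_antitoneOn hmono h1 hlt (hdiff u h1)))
    · rintro ⟨h1, h2⟩
      exact ⟨le_trans hTΛ h1, h2⟩
  -- compute the integral for the rescaled function
  have hδb : (∫ u in {u : ℝ | 0 ≤ u ∧ 0 < deriv (fun u => f (u + TΛ) / f TΛ) u},
      deriv (fun u => f (u + TΛ) / f TΛ) u) = Δ / f TΛ := by
    rw [hSb]
    have : ∀ u ∈ {u : ℝ | 0 ≤ u ∧ 0 < deriv f (u + TΛ)},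
        deriv (fun u => f (u + TΛ) / f TΛ) u = deriv f (u + TΛ) / f TΛ := by
      intro u _
      rw [hderivb]
    have hSm : MeasurableSet {u : ℝ | 0 ≤ u ∧ 0 < deriv f (u + TΛ)} := by
      have he : {u : ℝ | 0 ≤ u ∧ 0 < deriv f (u + TΛ)} =
          Set.Ici 0 ∩ (fun u => deriv f (u + TΛ)) ⁻¹' Set.Ioi 0 := by
        ext u
        simp only [Set.mem_inter_iff, Set.mem_Ici, Set.mem_preimage, Set.mem_Ioi]
        exact Iff.rfl
      rw [he]
      exact measurableSet_Ici.inter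
        (((measurable_deriv f).comp (measurable_id.add_const TΛ)) measurableSet_Ioi)
    rw [MeasureTheory.setIntegral_congr_fun hSm this, MeasureTheory.integral_div,
      shift_integral, ← hST, ← hΔ]
  have hMDb : MD d (fun u => f (u + TΛ) / f TΛ) = 2 * Δ / f TΛ := by
    rw [MD_eq hd hdiffb hposb, hδb]
    ring
  refine ⟨hMDb, hMDf, ?_⟩
  rw [hMDf, hMDb]
  rw [lt_div_iff₀ hfT]
  nlinarith
end

section
/- Consider the quasi-eternal non-Markovian qubit Pauli evolution with parameters α > 0 and t₀, whose intermediate maps have Choi minimal eigenvalue p_z(s,t) = (1/4)(1 + e^{−2α(t−s)} − 2e^{−α(t−s)} cosh^α(t−t₀)/cosh^α(s−t₀)). The dynamical maps Λ_t (case s=0) are CPTP for all t ≥ 0 if and only if t₀ ≥ t_{0,α} := max{0, (1/2)log(2^{1/α} − 1)}, and the useless-noise cutoff satisfies T^Λ = t₀ − t_{0,α}. -/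
/-- Smallest Choi eigenvalue `p_z(s,t)` of the intermediate map of the quasi-eternal
non-Markovian Pauli evolution with parameters `α, t₀`. -/
noncomputable def pzQE (α t₀ s t : ℝ) : ℝ :=
  (1 / 4) * (1 + Real.exp (-2 * α * (t - s)) -
    2 * Real.exp (-α * (t - s)) * (Real.cosh (t - t₀)) ^ α / (Real.cosh (s - t₀)) ^ α)

/-- Threshold `t_{0,α} = max{0, (1/2)log(2^{1/α} − 1)}`. -/
noncomputable def t0a (α : ℝ) : ℝ :=
  max 0 ((1 / 2) * Real.log ((2 : ℝ) ^ (1 / α) - 1))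

lemma phi_mono {p : ℝ} (hp : 1 ≤ p) {x : ℝ} (hx : 1 ≤ x) :
    (2:ℝ) ^ p - 1 ≤ (1 + x) ^ p - x ^ p := by
  have hd : ∀ y ∈ Set.Ici (1:ℝ), HasDerivAt (fun z : ℝ => (1+z)^p - z^p)
      (p * (1+y)^(p-1) * 1 - p * y^(p-1)) y := by
    intro y hy
    have hy1 : (1:ℝ) ≤ y := hy
    have h1 : HasDerivAt (fun z : ℝ => (1+z)^p) (p * (1+y)^(p-1) * 1) y := by
      have := (((hasDerivAt_id y).const_add 1).rpow_const (Or.inl (by positivity : (1:ℝ)+y ≠ 0) : _ ∨ 1 ≤ p))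
      simpa using this
    have h2 : HasDerivAt (fun z : ℝ => z^p) (p * y^(p-1)) y :=
      Real.hasDerivAt_rpow_const (Or.inl (by positivity))
    exact h1.sub h2
  have hmono : MonotoneOn (fun z : ℝ => (1+z)^p - z^p) (Set.Ici 1) := by
    apply monotoneOn_of_deriv_nonneg (convex_Ici 1)
    · intro y hy
      exact ((hd y hy).differentiableAt).continuousAt.continuousWithinAt
    · intro y hy
      rw [interior_Ici] at hy
      exact ((hd y (Set.mem_Ici.2 (le_of_lt (Set.mem_Ioi.1 hy)))).differentiableAt).differentiableWithinAt
    · intro y hy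
      rw [interior_Ici] at hy
      rw [(hd y (Set.mem_Ici.2 (le_of_lt (Set.mem_Ioi.1 hy)))).deriv]
      have hyp : (0:ℝ) < y := lt_trans one_pos hy
      have : y^(p-1) ≤ (1+y)^(p-1) :=
        Real.rpow_le_rpow hyp.le (by linarith) (by linarith)
      nlinarith [this, (by linarith : (0:ℝ) ≤ p)]
  have := hmono (Set.mem_Ici.2 le_rfl) (Set.mem_Ici.2 hx) hx
  norm_num at this
  linarith

lemma key2 {p w : ℝ} (hp : 1 ≤ p) (hw0 : 0 ≤ w) (hw1 : w ≤ 1) :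
    1 + ((2:ℝ)^p - 1) * w^p ≤ (1+w)^p := by
  rcases eq_or_lt_of_le hw0 with h | h
  · rw [← h, Real.zero_rpow (by linarith : p ≠ 0)]
    simp
  · have hx : (1:ℝ) ≤ w⁻¹ := by
      rw [le_inv_comm₀ one_pos h]  -- may need fixing
      simpa using hw1
    have hm := phi_mono hp hx
    have hwp : (0:ℝ) < w^p := Real.rpow_pos_of_pos h p
    have e1 : (w⁻¹)^p * w^p = 1 := by
      rw [← Real.mul_rpow (by positivity) hw0, inv_mul_cancel₀ h.ne', Real.one_rpow]
    have e2 : (1+w⁻¹)^p * w^p = (1+w)^p := by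
      rw [← Real.mul_rpow (by positivity) hw0]
      congr 1
      field_simp
      ring
    nlinarith [mul_le_mul_of_nonneg_right hm hwp.le]

lemma pos_iff (α : ℝ) (hα : 0 < α) (c t : ℝ) :
    0 ≤ pzQE α c 0 t ↔
      2 * ((Real.exp (-(2*c)) + Real.exp (-(2*t))) / (1 + Real.exp (-(2*c)))) ^ α
        ≤ 1 + Real.exp (-(2*t)) ^ α := by
  have hA : Real.exp (-2 * α * (t - 0)) = Real.exp (-(2*t)) ^ α := by
    rw [← Real.exp_mul]; congr 1; ring
  have hcosh : (0:ℝ) < Real.cosh c := Real.cosh_pos c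
  have h0c : Real.cosh (0 - c) = Real.cosh c := by rw [zero_sub, Real.cosh_neg]
  have e1 : Real.exp (-α * (t - 0)) = Real.exp (-t) ^ α := by
    rw [← Real.exp_mul]; congr 1; ring
  have e3 : Real.exp (-t) * Real.cosh (t - c) / Real.cosh c
      = (Real.exp (-(2*c)) + Real.exp (-(2*t))) / (1 + Real.exp (-(2*c))) := by
    rw [Real.cosh_eq, Real.cosh_eq]
    have r1 : Real.exp (t - c) = Real.exp t / Real.exp c := Real.exp_sub _ _
    have r2 : Real.exp (-(t - c)) = Real.exp c / Real.exp t := by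
      rw [neg_sub]; exact Real.exp_sub _ _
    have r3 : Real.exp (-t) = (Real.exp t)⁻¹ := Real.exp_neg _
    have r4 : Real.exp (-c) = (Real.exp c)⁻¹ := Real.exp_neg _
    have r5 : Real.exp (-(2*c)) = ((Real.exp c) * (Real.exp c))⁻¹ := by
      rw [← Real.exp_add, ← Real.exp_neg]; congr 1; ring
    have r6 : Real.exp (-(2*t)) = ((Real.exp t) * (Real.exp t))⁻¹ := by
      rw [← Real.exp_add, ← Real.exp_neg]; congr 1; ring
    rw [r1, r2, r3, r4, r5, r6]
    have ht := Real.exp_ne_zero t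
    have hc := Real.exp_ne_zero c
    have h1 : (0:ℝ) < Real.exp t * Real.exp t := by positivity
    have h2 : (0:ℝ) < Real.exp c * Real.exp c := by positivity
    field_simp
  have hB : 2 * Real.exp (-α * (t - 0)) * Real.cosh (t - c) ^ α / Real.cosh (0 - c) ^ α
      = 2 * ((Real.exp (-(2*c)) + Real.exp (-(2*t))) / (1 + Real.exp (-(2*c)))) ^ α := by
    rw [h0c, e1, mul_assoc,
      ← Real.mul_rpow (Real.exp_pos _).le (Real.cosh_pos _).le, mul_div_assoc,
      ← Real.div_rpow (by positivity) hcosh.le, e3]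
  rw [pzQE, hA, hB]
  constructor <;> intro h <;> nlinarith [h]

lemma main_iff (α : ℝ) (hα : 0 < α) (c : ℝ) :
    (∀ t : ℝ, 0 ≤ t → 0 ≤ pzQE α c 0 t) ↔ t0a α ≤ c := by
  have h21 : (1:ℝ) < (2:ℝ) ^ (1/α) :=
    (Real.one_lt_rpow_iff_of_pos two_pos).2 (Or.inl ⟨one_lt_two, by positivity⟩)
  set q : ℝ := (2:ℝ) ^ (1/α) with hq
  have hq1 : q ^ α = 2 := by
    rw [hq, ← Real.rpow_mul (by norm_num), one_div_mul_cancel hα.ne', Real.rpow_one]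
  have hr0 : (0:ℝ) < Real.exp (-(2*c)) := Real.exp_pos _
  set r : ℝ := Real.exp (-(2*c)) with hrdef
  have hrr : Real.exp (2*c) * r = 1 := by
    rw [hrdef, ← Real.exp_add]; norm_num
  constructor
  · -- CPTP for all t implies threshold
    intro H
    apply max_le
    · -- 0 ≤ c
      by_contra hc
      push_neg at hc
      set g : ℝ → ℝ := fun t => Real.cosh c ^ α * (1 + Real.exp (-2*α*t))
        - 2 * Real.exp (-α*t) * Real.cosh (t - c) ^ α with hgdef
      have hCpos : (0:ℝ) < Real.cosh c ^ α := Real.rpow_pos_of_pos (Real.cosh_pos c) α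
      have hgeq : ∀ t, g t = 4 * Real.cosh c ^ α * pzQE α c 0 t := by
        intro t
        rw [hgdef]
        simp only [pzQE, zero_sub, Real.cosh_neg, sub_zero]
        field_simp
      have hgpos : ∀ t : ℝ, 0 ≤ t → 0 ≤ g t := by
        intro t ht
        rw [hgeq]
        exact mul_nonneg (by positivity) (H t ht)
      have hg0 : g 0 = 0 := by
        show Real.cosh c ^ α * (1 + Real.exp (-2*α*0)) - 2 * Real.exp (-α*0) * Real.cosh (0-c)^α = 0
        rw [zero_sub, Real.cosh_neg]
        norm_num
        ring
      -- derivative of g at 0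
      have e2' : HasDerivAt (fun t : ℝ => Real.exp (-2*α*t)) (-2*α) 0 := by
        have h0 : HasDerivAt (fun t : ℝ => -2*α*t) (-2*α) 0 := by
          simpa using (hasDerivAt_id (0:ℝ)).const_mul (-2*α)
        simpa using h0.exp
      have m1 : HasDerivAt (fun t : ℝ => 2 * Real.exp (-α*t)) (2 * (-α)) 0 := by
        have h0 : HasDerivAt (fun t : ℝ => -α*t) (-α) 0 := by
          simpa using (hasDerivAt_id (0:ℝ)).const_mul (-α)
        simpa using h0.exp.const_mul 2
      have m2 : HasDerivAt (fun t : ℝ => Real.cosh (t - c) ^ α)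
          (α * Real.cosh c ^ (α-1) * (- Real.sinh c)) 0 := by
        have h0 : HasDerivAt (fun t : ℝ => Real.cosh (t - c)) (Real.sinh (0 - c)) 0 := by
          simpa using ((hasDerivAt_id (0:ℝ)).sub_const c).cosh
        have h1 := h0.rpow_const (p := α) (Or.inl (Real.cosh_pos _).ne')
        convert h1 using 1
        rw [zero_sub, Real.cosh_neg, Real.sinh_neg]
        ring
      have hD : HasDerivAt g (2 * α * Real.cosh c ^ (α-1) * Real.sinh c) 0 := by
        have hL : HasDerivAt (fun t : ℝ => Real.cosh c ^ α * (1 + Real.exp (-2*α*t)))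
            (Real.cosh c ^ α * (-2*α)) 0 := (e2'.const_add 1).const_mul _
        have hR : HasDerivAt (fun t : ℝ => 2 * Real.exp (-α*t) * Real.cosh (t - c) ^ α)
            ((2 * (-α)) * Real.cosh (0 - c) ^ α
              + (2 * Real.exp (-α*0)) * (α * Real.cosh c ^ (α-1) * (- Real.sinh c))) 0 :=
          m1.mul m2
        have := hL.sub hR
        have hCC : Real.cosh c ^ α = Real.cosh c ^ (α-1) * Real.cosh c := by
          rw [← Real.rpow_add_one (Real.cosh_pos c).ne']
          ring_nf
        refine this.congr_deriv ?_
        simp only [zero_sub, Real.cosh_neg, mul_zero, neg_zero, Real.exp_zero]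
        rw [hCC]
        ring
      have hDneg : 2 * α * Real.cosh c ^ (α-1) * Real.sinh c < 0 := by
        have hs : Real.sinh c < 0 := by
          have := Real.sinh_lt_sinh.2 hc
          simpa using this
        have hcp : (0:ℝ) < Real.cosh c ^ (α-1) := Real.rpow_pos_of_pos (Real.cosh_pos c) _
        have h2 : (0:ℝ) < 2 * α * Real.cosh c ^ (α-1) := by positivity
        exact mul_neg_of_pos_of_neg h2 hs
      have htend : Filter.Tendsto (slope g 0) (nhdsWithin 0 (Set.Ioi 0))
          (nhds (2 * α * Real.cosh c ^ (α-1) * Real.sinh c)) := by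
        apply (hasDerivAt_iff_tendsto_slope.mp hD).mono_left
        apply nhdsWithin_mono
        intro x hx
        exact Set.mem_compl_singleton_iff.2 (ne_of_gt hx)
      have hev : ∀ᶠ x in nhdsWithin (0:ℝ) (Set.Ioi 0), 0 ≤ slope g 0 x := by
        filter_upwards [self_mem_nhdsWithin] with x hx
        have hx' : (0:ℝ) < x := hx
        rw [slope_def_field]
        have := hgpos x hx'.le
        rw [div_nonneg_iff]  -- maybe easier
        left
        constructor
        · rw [hg0]; linarith
        · linarith
      have := ge_of_tendsto htend hev
      linarith
    · -- log part ≤ c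
      by_contra hc
      push_neg at hc
      have h1 : Real.exp (2*c) < q - 1 := by
        have hlt : 2*c < Real.log (q - 1) := by linarith
        calc Real.exp (2*c) < Real.exp (Real.log (q-1)) := Real.exp_lt_exp.2 hlt
          _ = q - 1 := Real.exp_log (by linarith)
      have hqr : 1 + r < q * r := by
        have := mul_lt_mul_of_pos_right h1 hr0
        rw [hrr] at this
        nlinarith
      have hhalf : (1:ℝ)/2 < (r / (1+r)) ^ α := by
        have hfrac : 1/q < r/(1+r) := by
          rw [div_lt_div_iff₀ (by linarith) (by linarith)]
          linarith
        have := Real.rpow_lt_rpow (by positivity) hfrac hα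
        have hqinv : ((1:ℝ)/q) ^ α = 1/2 := by
          rw [one_div, Real.inv_rpow (by positivity), hq1, one_div]
        rw [hqinv] at this
        exact this
      set ε : ℝ := 2 * (r / (1+r)) ^ α - 1 with hεdef
      have hε : 0 < ε := by rw [hεdef]; linarith
      set t : ℝ := max 0 (-Real.log ε / (2*α)) + 1 with htdef
      have ht0 : 0 ≤ t := by
        have := le_max_left (0:ℝ) (-Real.log ε / (2*α))
        rw [htdef]; linarith
      have htbig : -Real.log ε / (2*α) < t := by
        have := le_max_right (0:ℝ) (-Real.log ε / (2*α))
        rw [htdef]; linarith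
      have hu : Real.exp (-(2*t)) ^ α < ε := by
        rw [← Real.exp_mul]
        have harg : -(2*t) * α < Real.log ε := by
          have h2a : (0:ℝ) < 2*α := by linarith
          have := (div_lt_iff₀ h2a).1 htbig
          nlinarith
        calc Real.exp (-(2*t) * α) < Real.exp (Real.log ε) := Real.exp_lt_exp.2 harg
          _ = ε := Real.exp_log hε
      have hmono : (r / (1+r)) ^ α ≤ ((r + Real.exp (-(2*t))) / (1+r)) ^ α := by
        apply Real.rpow_le_rpow (by positivity) _ hα.le
        apply div_le_div_of_nonneg_right _ (by linarith)
        linarith [Real.exp_pos (-(2*t))]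
      have hcontr := (pos_iff α hα c t).1 (H t ht0)
      rw [← hrdef] at hcontr
      have hfin : 2 * ((r + Real.exp (-(2*t)))/(1+r)) ^ α
          < 2 * ((r + Real.exp (-(2*t)))/(1+r)) ^ α := by
        calc 2 * ((r + Real.exp (-(2*t)))/(1+r)) ^ α ≤ 1 + Real.exp (-(2*t)) ^ α := hcontr
          _ < 1 + ε := by linarith
          _ = 2 * (r/(1+r)) ^ α := by rw [hεdef]; ring
          _ ≤ 2 * ((r + Real.exp (-(2*t)))/(1+r)) ^ α := by linarith
      exact lt_irrefl _ hfin
  · -- threshold implies CPTP for all t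
    intro hc t ht
    have h0c : 0 ≤ c := le_trans (le_max_left _ _) hc
    have hr1 : r ≤ 1 := by
      rw [hrdef, ← Real.exp_zero]
      exact Real.exp_le_exp.2 (by linarith)
    have hqr : q * r ≤ 1 + r := by
      have hlog : Real.log (q - 1) ≤ 2*c := by
        have := le_trans (le_max_right _ _) hc
        linarith
      have h1 : q - 1 ≤ Real.exp (2*c) := by
        calc q - 1 = Real.exp (Real.log (q-1)) := (Real.exp_log (by linarith)).symm
          _ ≤ Real.exp (2*c) := Real.exp_le_exp.2 hlog
      have := mul_le_mul_of_nonneg_right h1 hr0.le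
      rw [hrr] at this
      nlinarith
    rw [pos_iff α hα c t, ← hrdef]
    set u : ℝ := Real.exp (-(2*t)) with hudef
    have hu0 : (0:ℝ) < u := Real.exp_pos _
    have hu1 : u ≤ 1 := by
      rw [hudef, ← Real.exp_zero]
      exact Real.exp_le_exp.2 (by linarith)
    have hden : (0:ℝ) < 1 + r := by linarith
    have hdenα : (0:ℝ) < (1+r) ^ α := Real.rpow_pos_of_pos hden α
    rcases le_total 1 α with hα1 | hα1
    · -- convexity case
      have step1 : (r + u) / (1 + r) ≤ (1 + u)/2 := by
        rw [div_le_div_iff₀ hden two_pos]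
        nlinarith
      have step2 : ((1 + u)/2) ^ α ≤ (1 + u ^ α)/2 := by
        have hcvx := (convexOn_rpow hα1).2 (Set.mem_Ici.2 (by norm_num : (0:ℝ) ≤ 1))
          (Set.mem_Ici.2 hu0.le) (by norm_num : (0:ℝ) ≤ 1/2) (by norm_num : (0:ℝ) ≤ 1/2)
          (by norm_num)
        simp only [smul_eq_mul, Real.one_rpow] at hcvx
        calc ((1+u)/2) ^ α = (1/2 * 1 + 1/2 * u) ^ α := by ring_nf
          _ ≤ 1/2 * 1 + 1/2 * u ^ α := by simpa using hcvx
          _ = (1 + u ^ α)/2 := by ring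
      have step0 : ((r + u)/(1 + r)) ^ α ≤ ((1 + u)/2) ^ α :=
        Real.rpow_le_rpow (by positivity) step1 hα.le
      nlinarith
    · -- concavity case via key2
      have hp : 1 ≤ 1/α := by
        rw [le_div_iff₀ hα]; linarith
      have hw1 : u ^ α ≤ 1 := Real.rpow_le_one hu0.le hu1 hα.le
      have hkey := key2 hp (by positivity : (0:ℝ) ≤ u ^ α) hw1
      have hwp : (u ^ α) ^ (1/α) = u := by
        rw [← Real.rpow_mul hu0.le, mul_one_div_cancel hα.ne', Real.rpow_one]
      rw [hwp, ← hq] at hkey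
      -- hkey : 1 + (q - 1) * u ≤ (1 + u^α)^(1/α)
      set D : ℝ := (1 + u ^ α) ^ (1/α) with hDdef
      have hstep : q * (r + u) ≤ (1 + r) * D := by
        have h1 : q * (r + u) ≤ (1 + r) * (1 + (q - 1)*u) := by
          nlinarith [mul_nonneg (sub_nonneg.2 hu1) (by linarith : (0:ℝ) ≤ 1 + r - q*r)]
        have h2 : (1 + r) * (1 + (q-1)*u) ≤ (1 + r) * D :=
          mul_le_mul_of_nonneg_left hkey hden.le
        linarith
      have hraise : (q * (r + u)) ^ α ≤ ((1 + r) * D) ^ α :=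
        Real.rpow_le_rpow (by positivity) hstep hα.le
      have hL : (q * (r + u)) ^ α = 2 * (r + u) ^ α := by
        rw [Real.mul_rpow (by positivity) (by positivity), hq1]
      have hDα : D ^ α = 1 + u ^ α := by
        rw [hDdef, ← Real.rpow_mul (by positivity), one_div_mul_cancel hα.ne', Real.rpow_one]
      have hRi : ((1 + r) * D) ^ α = (1 + r) ^ α * (1 + u ^ α) := by
        rw [Real.mul_rpow hden.le (by positivity), hDα]
      rw [hL, hRi] at hraise
      rw [Real.div_rpow (by positivity) hden.le]
      rw [mul_div_assoc', div_le_iff₀ hdenα]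
      nlinarith

lemma pz_shift (α t₀ s t : ℝ) : pzQE α t₀ s t = pzQE α (t₀ - s) 0 (t - s) := by
  simp only [pzQE]
  ring_nf

/-- For the quasi-eternal non-Markovian evolution (intermediate maps
CPTP iff `pzQE α t₀ s t ≥ 0`): the dynamical maps (case `s = 0`) are CPTP for all
`t ≥ 0` iff `t₀ ≥ t_{0,α}`, and for `t₀ ≥ t_{0,α}` the useless-noise cutoff
`T^Λ = sup{T ≥ 0 | (A) ∧ (B)}` equals `t₀ − t_{0,α}`. -/
theorem stmt17 (α t₀ : ℝ) (hα : 0 < α) :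
    (∀ t₀' : ℝ, ((∀ t : ℝ, 0 ≤ t → 0 ≤ pzQE α t₀' 0 t) ↔ t0a α ≤ t₀')) ∧
    (t0a α ≤ t₀ →
      sSup {T : ℝ | 0 ≤ T ∧
          (∀ s t : ℝ, 0 ≤ s → s ≤ t → t ≤ T → 0 ≤ pzQE α t₀ s t) ∧
          (∀ t : ℝ, T ≤ t → 0 ≤ pzQE α t₀ T t)} = t₀ - t0a α) := by
  constructor
  · intro t₀'
    exact main_iff α hα t₀'
  · intro hge
    have hub : ∀ T ∈ {T : ℝ | 0 ≤ T ∧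
        (∀ s t : ℝ, 0 ≤ s → s ≤ t → t ≤ T → 0 ≤ pzQE α t₀ s t) ∧
        (∀ t : ℝ, T ≤ t → 0 ≤ pzQE α t₀ T t)}, T ≤ t₀ - t0a α := by
      rintro T ⟨hT0, _, hB⟩
      have hall : ∀ τ : ℝ, 0 ≤ τ → 0 ≤ pzQE α (t₀ - T) 0 τ := by
        intro τ hτ
        have := hB (T + τ) (by linarith)
        rw [pz_shift] at this
        have heq : pzQE α (t₀ - T) (0:ℝ) (T + τ - T) = pzQE α (t₀ - T) 0 τ := by
          congr 1
          ring
        rwa [heq] at this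
      have := (main_iff α hα (t₀ - T)).1 hall
      linarith
    have hmem : (t₀ - t0a α) ∈ {T : ℝ | 0 ≤ T ∧
        (∀ s t : ℝ, 0 ≤ s → s ≤ t → t ≤ T → 0 ≤ pzQE α t₀ s t) ∧
        (∀ t : ℝ, T ≤ t → 0 ≤ pzQE α t₀ T t)} := by
      refine ⟨by linarith, ?_, ?_⟩
      · intro s t hs hst hT
        rw [pz_shift]
        exact (main_iff α hα (t₀ - s)).2 (by linarith) (t - s) (by linarith)
      · intro t ht
        rw [pz_shift]
        exact (main_iff α hα (t₀ - (t₀ - t0a α))).2 (by linarith)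
          (t - (t₀ - t0a α)) (by linarith)
    exact le_antisymm (csSup_le ⟨t₀ - t0a α, hmem⟩ hub) (le_csSup ⟨t₀ - t0a α, hub⟩ hmem)
end

section
/- Let M^{mix}(Λ) = min{p ∈ [0,1] : ∃ Markovian Λ^M with (1−p)Λ + pΛ^M Markovian}. If Λ is an NNM evolution with cutoff T^Λ and PNM core Λ̄_t = V_{t+T^Λ,T^Λ}, then M^{mix}(Λ) ≤ M^{mix}(Λ̄): given a Markovian Γ̄ with (1−p̄)Λ̄ + p̄Γ̄ Markovian, the evolution Γ defined by Γ_t = Λ_t for t < T^Λ and Γ_t = Γ̄_{t−T^Λ} ∘ Λ_{T^Λ} for t ≥ T^Λ is Markovian and makes (1−p̄)Λ + p̄Γ CP-divisible. -/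
open scoped ComplexOrder

/-- Choi matrix of a linear map on `d × d` complex matrices. -/
noncomputable def choi {d : ℕ}
    (Φ : Matrix (Fin d) (Fin d) ℂ →ₗ[ℂ] Matrix (Fin d) (Fin d) ℂ) :
    Matrix (Fin d × Fin d) (Fin d × Fin d) ℂ :=
  Matrix.of fun p q => (Φ (Matrix.single p.1 q.1 1)) p.2 q.2

/-- CPTP: positive semidefinite Choi matrix (Choi's theorem) and trace preservation. -/
def IsCPTP {d : ℕ} (Φ : Matrix (Fin d) (Fin d) ℂ →ₗ[ℂ] Matrix (Fin d) (Fin d) ℂ) : Prop :=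
  (choi Φ).PosSemidef ∧ ∀ A, (Φ A).trace = A.trace

/-- An evolution is Markovian iff it is CP-divisible: it admits CPTP intermediate maps
between any two ordered times. -/
def Markovian {d : ℕ}
    (Γ : ℝ → (Matrix (Fin d) (Fin d) ℂ →ₗ[ℂ] Matrix (Fin d) (Fin d) ℂ)) : Prop :=
  ∃ W : ℝ → ℝ → (Matrix (Fin d) (Fin d) ℂ →ₗ[ℂ] Matrix (Fin d) (Fin d) ℂ),
    ∀ s t : ℝ, 0 ≤ s → s ≤ t → Γ t = (W t s).comp (Γ s) ∧ IsCPTP (W t s)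

/-- Convex mixture `(1−p)Λ + pΓ` of two evolutions. -/
noncomputable def mixEvo {d : ℕ} (p : ℝ)
    (Λ Γ : ℝ → (Matrix (Fin d) (Fin d) ℂ →ₗ[ℂ] Matrix (Fin d) (Fin d) ℂ)) :
    ℝ → (Matrix (Fin d) (Fin d) ℂ →ₗ[ℂ] Matrix (Fin d) (Fin d) ℂ) :=
  fun t => ((1 - p : ℝ) : ℂ) • Λ t + ((p : ℝ) : ℂ) • Γ t

/-- `M^{mix}(Λ)`: the minimal weight of incoherent Markovian noise making `Λ`
Markovian. -/
noncomputable def Mmix {d : ℕ}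
    (Λ : ℝ → (Matrix (Fin d) (Fin d) ℂ →ₗ[ℂ] Matrix (Fin d) (Fin d) ℂ)) : ℝ :=
  sInf {p : ℝ | p ∈ Set.Icc (0 : ℝ) 1 ∧
    ∃ Γ : ℝ → (Matrix (Fin d) (Fin d) ℂ →ₗ[ℂ] Matrix (Fin d) (Fin d) ℂ),
      (∀ t, 0 ≤ t → IsCPTP (Γ t)) ∧ Markovian Γ ∧ Markovian (mixEvo p Λ Γ)}

section Aux
open Matrix
variable {d : ℕ}

/-- conjugation map A ↦ K A Kᴴ -/
noncomputable def conjMap (K : Matrix (Fin d) (Fin d) ℂ) :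
    Matrix (Fin d) (Fin d) ℂ →ₗ[ℂ] Matrix (Fin d) (Fin d) ℂ where
  toFun A := K * A * Kᴴ
  map_add' A B := by simp [Matrix.mul_add, Matrix.add_mul]
  map_smul' c A := by simp [Matrix.mul_smul, Matrix.smul_mul]

lemma conjMap_apply (K A : Matrix (Fin d) (Fin d) ℂ) : conjMap K A = K * A * Kᴴ := rfl

lemma choi_add (Φ Ψ : Matrix (Fin d) (Fin d) ℂ →ₗ[ℂ] Matrix (Fin d) (Fin d) ℂ) :
    choi (Φ + Ψ) = choi Φ + choi Ψ := by
  ext p q; simp [choi]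

lemma choi_smul (c : ℂ) (Φ : Matrix (Fin d) (Fin d) ℂ →ₗ[ℂ] Matrix (Fin d) (Fin d) ℂ) :
    choi (c • Φ) = c • choi Φ := by
  ext p q; simp [choi]

lemma choi_sum {ι : Type*} (s : Finset ι)
    (f : ι → (Matrix (Fin d) (Fin d) ℂ →ₗ[ℂ] Matrix (Fin d) (Fin d) ℂ)) :
    choi (∑ i ∈ s, f i) = ∑ i ∈ s, choi (f i) := by
  classical
  induction s using Finset.cons_induction with
  | empty => ext p q; simp [choi]
  | cons a s ha ih => rw [Finset.sum_cons, Finset.sum_cons, choi_add, ih]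

lemma choi_conjMap_posSemidef (K : Matrix (Fin d) (Fin d) ℂ) :
    (choi (conjMap K)).PosSemidef := by
  have h : choi (conjMap K)
      = (Matrix.of fun (_ : Fin 1) (p : Fin d × Fin d) => star (K p.2 p.1))ᴴ *
        (Matrix.of fun (_ : Fin 1) (p : Fin d × Fin d) => star (K p.2 p.1)) := by
    ext p q
    simp [choi, conjMap_apply, Matrix.mul_apply, Matrix.single, Matrix.conjTranspose_apply,
      ite_and, Finset.sum_ite_eq, Finset.sum_ite_eq', mul_comm]
  rw [h]
  exact Matrix.posSemidef_conjTranspose_mul_self _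

lemma choi_inj {Φ Ψ : Matrix (Fin d) (Fin d) ℂ →ₗ[ℂ] Matrix (Fin d) (Fin d) ℂ}
    (h : choi Φ = choi Ψ) : Φ = Ψ := by
  ext A : 1
  rw [Matrix.matrix_eq_sum_single A]
  rw [map_sum, map_sum]
  refine Finset.sum_congr rfl fun i _ => ?_
  rw [map_sum, map_sum]
  refine Finset.sum_congr rfl fun j _ => ?_
  have : (Matrix.single i j (A i j)) = A i j • Matrix.single i j 1 := by
    rw [Matrix.smul_single, smul_eq_mul, mul_one]
  rw [this, _root_.map_smul, _root_.map_smul]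
  congr 1
  ext x y
  have := congrFun (congrFun h (i, x)) (j, y)
  simpa [choi] using this

/-- Kraus decomposition from PSD Choi matrix. -/
lemma exists_kraus (Φ : Matrix (Fin d) (Fin d) ℂ →ₗ[ℂ] Matrix (Fin d) (Fin d) ℂ)
    (h : (choi Φ).PosSemidef) :
    ∃ K : (Fin d × Fin d) → Matrix (Fin d) (Fin d) ℂ,
      Φ = ∑ k : Fin d × Fin d, conjMap (K k) := by
  classical
  set B := (open scoped MatrixOrder in CFC.sqrt (choi Φ)) with hB
  have hBB : Bᴴ * B = choi Φ := by
    open scoped MatrixOrder in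
    (have h0 : (0 : Matrix (Fin d × Fin d) (Fin d × Fin d) ℂ) ≤ choi Φ :=
       Matrix.nonneg_iff_posSemidef.mpr h
     rw [hB, ← Matrix.star_eq_conjTranspose, (CFC.sqrt_nonneg (choi Φ)).isSelfAdjoint.star_eq,
       CFC.sqrt_mul_sqrt_self _ h0])
  refine ⟨fun k => Matrix.of fun x i => star (B k (i, x)), ?_⟩
  apply choi_inj
  rw [choi_sum]
  ext p q
  obtain ⟨i, x⟩ := p; obtain ⟨j, y⟩ := q
  have hl : choi Φ (i, x) (j, y) = ∑ k : Fin d × Fin d, star (B k (i, x)) * B k (j, y) := by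
    rw [← hBB, Matrix.mul_apply]
    simp [Matrix.conjTranspose_apply]
  rw [hl]
  rw [Matrix.sum_apply]
  congr 1; ext k
  simp only [choi, conjMap_apply, Matrix.of_apply]
  simp [Matrix.mul_apply, Matrix.single, Matrix.conjTranspose_apply, ite_and,
    Finset.sum_ite_eq, Finset.sum_ite_eq', mul_comm]

lemma posSemidef_sum {ι : Type*} (s : Finset ι)
    (f : ι → Matrix (Fin d × Fin d) (Fin d × Fin d) ℂ)
    (h : ∀ i ∈ s, (f i).PosSemidef) : (∑ i ∈ s, f i).PosSemidef := by
  classical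
  induction s using Finset.cons_induction with
  | empty => simpa using Matrix.PosSemidef.zero
  | cons a s ha ih =>
      rw [Finset.sum_cons]
      exact ((h a (Finset.mem_cons_self a s)).add
        (ih fun i hi => h i (Finset.mem_cons_of_mem hi)))

/-- composition of CPTP maps is CPTP -/
lemma IsCPTP.comp {Φ Ψ : Matrix (Fin d) (Fin d) ℂ →ₗ[ℂ] Matrix (Fin d) (Fin d) ℂ}
    (hΦ : IsCPTP Φ) (hΨ : IsCPTP Ψ) : IsCPTP (Φ.comp Ψ) := by
  obtain ⟨K, hK⟩ := exists_kraus Φ hΦ.1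
  obtain ⟨L, hL⟩ := exists_kraus Ψ hΨ.1
  constructor
  · have hc : Φ.comp Ψ = ∑ k : Fin d × Fin d, ∑ l : Fin d × Fin d, conjMap (K l * L k) := by
      apply LinearMap.ext; intro A
      simp only [LinearMap.comp_apply, hK, hL, LinearMap.coe_sum, Finset.sum_apply,
        map_sum, LinearMap.sum_apply]
      refine Finset.sum_congr rfl fun k _ => Finset.sum_congr rfl fun l _ => ?_
      simp [conjMap_apply, Matrix.conjTranspose_mul, Matrix.mul_assoc]
    rw [hc, choi_sum]
    refine posSemidef_sum _ _ fun k _ => ?_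
    rw [choi_sum]
    exact posSemidef_sum _ _ fun l _ => choi_conjMap_posSemidef _
  · intro A
    simp only [LinearMap.comp_apply]
    rw [hΦ.2, hΨ.2]

end Aux


lemma PosSemidef.real_smul {n : Type*} [Fintype n] {M : Matrix n n ℂ} (hM : M.PosSemidef)
    {r : ℝ} (hr : 0 ≤ r) : ((r : ℂ) • M).PosSemidef := by
  constructor
  · have h1 : star ((r : ℝ) : ℂ) = ((r : ℝ) : ℂ) := by
      simp [Complex.star_def, Complex.conj_ofReal]
    unfold Matrix.IsHermitian
    rw [Matrix.conjTranspose_smul, h1, hM.1.eq]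
  · intro x
    exact (hM.smul (a := (r : ℂ)) (by exact_mod_cast hr)).2 x

lemma IsCPTP.mix {d : ℕ} {p : ℝ} (hp0 : 0 ≤ p) (hp1 : p ≤ 1)
    {Φ Ψ : Matrix (Fin d) (Fin d) ℂ →ₗ[ℂ] Matrix (Fin d) (Fin d) ℂ}
    (hΦ : IsCPTP Φ) (hΨ : IsCPTP Ψ) :
    IsCPTP (((1 - p : ℝ) : ℂ) • Φ + ((p : ℝ) : ℂ) • Ψ) := by
  constructor
  · rw [choi_add, choi_smul, choi_smul]
    exact (PosSemidef.real_smul hΦ.1 (by linarith)).add (PosSemidef.real_smul hΨ.1 hp0)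
  · intro A
    simp only [LinearMap.add_apply, LinearMap.smul_apply, Matrix.trace_add, Matrix.trace_smul,
      hΦ.2, hΨ.2, smul_eq_mul]
    push_cast
    ring

lemma isCPTP_id {d : ℕ} :
    IsCPTP (LinearMap.id : Matrix (Fin d) (Fin d) ℂ →ₗ[ℂ] Matrix (Fin d) (Fin d) ℂ) := by
  constructor
  · have h : (LinearMap.id : Matrix (Fin d) (Fin d) ℂ →ₗ[ℂ] Matrix (Fin d) (Fin d) ℂ)
        = conjMap 1 := by
      apply LinearMap.ext; intro A
      simp [conjMap_apply]
    rw [h]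
    exact choi_conjMap_posSemidef 1
  · intro A; rfl

/-- For an NNM evolution `Λ` with cutoff `TΛ` and PNM core
`Λ̄ t = V (t+TΛ) TΛ`: whenever a Markovian `Γ̄` makes `(1−p̄)Λ̄ + p̄Γ̄` Markovian, the
Markovian pre-processed evolution `Γ_t = Λ_t` (`t < TΛ`), `Γ_t = Γ̄_{t−TΛ} ∘ Λ_{TΛ}`
(`t ≥ TΛ`) is Markovian and makes `(1−p̄)Λ + p̄Γ` Markovian; consequently
`M^{mix}(Λ) ≤ M^{mix}(Λ̄)`. -/
theorem stmt19 {d : ℕ}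
    (Λ : ℝ → (Matrix (Fin d) (Fin d) ℂ →ₗ[ℂ] Matrix (Fin d) (Fin d) ℂ))
    (V : ℝ → ℝ → (Matrix (Fin d) (Fin d) ℂ →ₗ[ℂ] Matrix (Fin d) (Fin d) ℂ))
    (TΛ : ℝ) (hTΛ : 0 ≤ TΛ)
    (hdiv : ∀ s t : ℝ, 0 ≤ s → s ≤ t → Λ t = (V t s).comp (Λ s))
    (hCPdiv : ∀ s t : ℝ, 0 ≤ s → s ≤ t → t ≤ TΛ → IsCPTP (V t s))
    (hB : ∀ t : ℝ, TΛ ≤ t → IsCPTP (V t TΛ))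
    (hEvo : ∀ t : ℝ, 0 ≤ t → IsCPTP (Λ t))
    (hinv : ∀ t : ℝ, 0 ≤ t → Function.Bijective (Λ t)) :
    (∀ p : ℝ, p ∈ Set.Icc (0 : ℝ) 1 →
      ∀ Γb : ℝ → (Matrix (Fin d) (Fin d) ℂ →ₗ[ℂ] Matrix (Fin d) (Fin d) ℂ),
        (∀ t, 0 ≤ t → IsCPTP (Γb t)) → Markovian Γb →
        Markovian (mixEvo p (fun t => V (t + TΛ) TΛ) Γb) →
        (Markovian (fun t => if t < TΛ then Λ t else (Γb (t - TΛ)).comp (Λ TΛ)) ∧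
         Markovian (mixEvo p Λ
           (fun t => if t < TΛ then Λ t else (Γb (t - TΛ)).comp (Λ TΛ))))) ∧
    Mmix Λ ≤ Mmix (fun t => V (t + TΛ) TΛ) := by
  have key : ∀ p : ℝ, p ∈ Set.Icc (0 : ℝ) 1 →
      ∀ Γb : ℝ → (Matrix (Fin d) (Fin d) ℂ →ₗ[ℂ] Matrix (Fin d) (Fin d) ℂ),
        (∀ t, 0 ≤ t → IsCPTP (Γb t)) → Markovian Γb →
        Markovian (mixEvo p (fun t => V (t + TΛ) TΛ) Γb) →
        (Markovian (fun t => if t < TΛ then Λ t else (Γb (t - TΛ)).comp (Λ TΛ)) ∧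
         Markovian (mixEvo p Λ
           (fun t => if t < TΛ then Λ t else (Γb (t - TΛ)).comp (Λ TΛ)))) := by
    intro p hp Γb hΓb hMarkΓb hMarkMix
    obtain ⟨Wb, hWb⟩ := hMarkΓb
    obtain ⟨Wm, hWm⟩ := hMarkMix
    have hMb_cptp : ∀ u : ℝ, 0 ≤ u →
        IsCPTP (mixEvo p (fun t => V (t + TΛ) TΛ) Γb u) := by
      intro u hu
      exact IsCPTP.mix hp.1 hp.2 (hB (u + TΛ) (by linarith)) (hΓb u hu)
    have hMlt : ∀ t : ℝ, t < TΛ →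
        mixEvo p Λ (fun t => if t < TΛ then Λ t else (Γb (t - TΛ)).comp (Λ TΛ)) t = Λ t := by
      intro t ht
      have hc : ((1 - p : ℝ) : ℂ) + ((p : ℝ) : ℂ) = 1 := by push_cast; ring
      simp only [mixEvo, if_pos ht]
      rw [← add_smul, hc, one_smul]
    have hMge : ∀ t : ℝ, ¬ t < TΛ →
        mixEvo p Λ (fun t => if t < TΛ then Λ t else (Γb (t - TΛ)).comp (Λ TΛ)) t
          = (mixEvo p (fun u => V (u + TΛ) TΛ) Γb (t - TΛ)).comp (Λ TΛ) := by
      intro t ht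
      have htT : TΛ ≤ t := not_lt.mp ht
      have he : t - TΛ + TΛ = t := by ring
      simp only [mixEvo, if_neg ht]
      rw [LinearMap.add_comp, LinearMap.smul_comp, LinearMap.smul_comp, he,
        hdiv TΛ t hTΛ htT]
    constructor
    · refine ⟨fun t s => if t < TΛ then V t s
        else if s < TΛ then (Γb (t - TΛ)).comp (V TΛ s)
        else Wb (t - TΛ) (s - TΛ), ?_⟩
      intro s t hs hst
      by_cases ht : t < TΛ
      · have hsT : s < TΛ := lt_of_le_of_lt hst ht
        simp only [if_pos ht, if_pos hsT]
        exact ⟨hdiv s t hs hst, hCPdiv s t hs hst ht.le⟩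
      · by_cases hsT : s < TΛ
        · simp only [if_neg ht, if_pos hsT]
          constructor
          · rw [LinearMap.comp_assoc, ← hdiv s TΛ hs hsT.le]
          · exact IsCPTP.comp (hΓb (t - TΛ) (by linarith [not_lt.mp ht]))
              (hCPdiv s TΛ hs hsT.le le_rfl)
        · simp only [if_neg ht, if_neg hsT]
          obtain ⟨heq, hcp⟩ := hWb (s - TΛ) (t - TΛ)
            (by linarith [not_lt.mp hsT]) (by linarith)
          exact ⟨by rw [heq, LinearMap.comp_assoc], hcp⟩
    · refine ⟨fun t s => if t < TΛ then V t s
        else if s < TΛ then (mixEvo p (fun u => V (u + TΛ) TΛ) Γb (t - TΛ)).comp (V TΛ s)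
        else Wm (t - TΛ) (s - TΛ), ?_⟩
      intro s t hs hst
      by_cases ht : t < TΛ
      · have hsT : s < TΛ := lt_of_le_of_lt hst ht
        simp only [if_pos ht]
        constructor
        · rw [hMlt t ht, hMlt s hsT]
          exact hdiv s t hs hst
        · exact hCPdiv s t hs hst ht.le
      · by_cases hsT : s < TΛ
        · simp only [if_neg ht, if_pos hsT]
          constructor
          · rw [hMge t ht, hMlt s hsT, LinearMap.comp_assoc, ← hdiv s TΛ hs hsT.le]
          · exact IsCPTP.comp (hMb_cptp (t - TΛ) (by linarith [not_lt.mp ht]))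
              (hCPdiv s TΛ hs hsT.le le_rfl)
        · simp only [if_neg ht, if_neg hsT]
          obtain ⟨heq, hcp⟩ := hWm (s - TΛ) (t - TΛ)
            (by linarith [not_lt.mp hsT]) (by linarith)
          refine ⟨?_, hcp⟩
          rw [hMge t ht, hMge s hsT, heq, LinearMap.comp_assoc]
  refine ⟨key, ?_⟩
  have h1mem : ∀ Λ' : ℝ → (Matrix (Fin d) (Fin d) ℂ →ₗ[ℂ] Matrix (Fin d) (Fin d) ℂ),
      (1 : ℝ) ∈ {p : ℝ | p ∈ Set.Icc (0 : ℝ) 1 ∧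
        ∃ Γ : ℝ → (Matrix (Fin d) (Fin d) ℂ →ₗ[ℂ] Matrix (Fin d) (Fin d) ℂ),
          (∀ t, 0 ≤ t → IsCPTP (Γ t)) ∧ Markovian Γ ∧ Markovian (mixEvo p Λ' Γ)} := by
    intro Λ'
    have hidem : mixEvo (1 : ℝ) Λ' (fun _ => LinearMap.id)
        = fun _ => (LinearMap.id : Matrix (Fin d) (Fin d) ℂ →ₗ[ℂ] Matrix (Fin d) (Fin d) ℂ) := by
      funext t
      simp [mixEvo]
    refine ⟨⟨zero_le_one, le_rfl⟩, fun _ => LinearMap.id, fun t _ => isCPTP_id, ?_, ?_⟩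
    · exact ⟨fun _ _ => LinearMap.id, fun s t hs hst => ⟨rfl, isCPTP_id⟩⟩
    · rw [hidem]
      exact ⟨fun _ _ => LinearMap.id, fun s t hs hst => ⟨rfl, isCPTP_id⟩⟩
  unfold Mmix
  apply csInf_le_csInf
  · exact ⟨0, fun x hx => hx.1.1⟩
  · exact ⟨1, h1mem _⟩
  · intro p hp
    obtain ⟨hpIcc, Γb, hΓbC, hM1, hM2⟩ := hp
    obtain ⟨hMark, hMarkMix⟩ := key p hpIcc Γb hΓbC hM1 hM2
    refine ⟨hpIcc, fun t => if t < TΛ then Λ t else (Γb (t - TΛ)).comp (Λ TΛ),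
      ?_, hMark, hMarkMix⟩
    intro t htpos
    by_cases ht : t < TΛ
    · simpa [if_pos ht] using hEvo t htpos
    · have := IsCPTP.comp (hΓbC (t - TΛ) (by linarith [not_lt.mp ht])) (hEvo TΛ hTΛ)
      simpa [if_neg ht] using this
end
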